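/- Let r be a power of 2, U = {z ∈ GF(r²) : z^{r+1} = 1}, and for z ∈ U write z̄ = z^r = z^{-1}. For a₀ ∈ GF(r) and a₁,…,a_t ∈ GF(r²) not all zero, let N = #{z ∈ U : a₀ + Σ_{j=1}^t (a_j z^{-2jh} + a_j^r z^{2jh})} = 0}, where e = gcd(h, r+1) and 1 ≤ t < (r+1)/(2e). Then N ∈ {0, e, 2e, …, 2te}, i.e., N = je for some 0 ≤ j ≤ 2t. -/

import Mathlib

open Polynomial Finset

theorem stmt16 (l r : ℕ) (hl : 1 ≤ l) (hr : r = 2 ^ l)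
    (K L : Type) [Field K] [Field L] [Fintype K] [Fintype L] [Algebra K L]
    (hK : Fintype.card K = r) (hL : Fintype.card L = r ^ 2)
    (h : ℤ) (e : ℕ) (he : e = Int.gcd h (r + 1))
    (t : ℕ) (ht1 : 1 ≤ t) (ht2 : 2 * e * t < r + 1)
    (a₀ : K) (a : ℕ → L) (hne : ¬ (a₀ = 0 ∧ ∀ j ∈ Finset.Icc 1 t, a j = 0)) :
    ∃ j ≤ 2 * t,
      Nat.card {z : Lˣ // z ^ (r + 1) = 1 ∧
        algebraMap K L a₀ + ∑ i ∈ Finset.Icc 1 t,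
          (a i * ((z ^ (-(2 * (i : ℤ) * h)) : Lˣ) : L) +
            (a i) ^ r * ((z ^ (2 * (i : ℤ) * h) : Lˣ) : L)) = 0} = j * e := by
  classical
  have hr2 : 2 ≤ r := by
    subst hr
    calc 2 = 2 ^ 1 := (pow_one 2).symm
    _ ≤ 2 ^ l := Nat.pow_le_pow_right (by norm_num) hl
  have hoddn : ¬ 2 ∣ (r + 1) := by
    intro hdvd
    have : 2 ∣ r := by subst hr; exact dvd_pow_self 2 (by omega)
    omega
  -- e as a Nat gcd
  have he' : e = Nat.gcd h.natAbs (r + 1) := by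
    have h3 : ((r : ℤ) + 1).natAbs = r + 1 := by omega
    rw [he, Int.gcd, h3]
  have hepos : 0 < e := by
    rw [he']; exact Nat.gcd_pos_of_pos_right _ (by omega)
  have hednv : e ∣ r + 1 := he' ▸ Nat.gcd_dvd_right _ _
  have heh : (e : ℤ) ∣ h := by
    rw [he]; exact Int.gcd_dvd_left _ _
  -- gcd of 2h with r+1 is also e
  have hg2 : Int.gcd (2 * h) ((r : ℤ) + 1) = e := by
    rw [he']
    have h2 : (2 * h).natAbs = 2 * h.natAbs := by
      rw [Int.natAbs_mul]; norm_num
    have h3 : ((r : ℤ) + 1).natAbs = r + 1 := by omega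
    rw [Int.gcd, h2, h3]
    exact Nat.Coprime.gcd_mul_left_cancel _
      ((Nat.Prime.coprime_iff_not_dvd Nat.prime_two).mpr hoddn)
  -- kernel characterization
  have hker : ∀ w : Lˣ, (w ^ (r + 1) = 1 ∧ w ^ (-(2 * h)) = 1) ↔ w ^ e = 1 := by
    intro w
    constructor
    · rintro ⟨h1, h2⟩
      have h2' : w ^ (2 * h) = 1 := by
        rw [zpow_neg, inv_eq_one] at h2; exact h2
      have h1' : w ^ ((r : ℤ) + 1) = 1 := by
        rw [show ((r : ℤ) + 1) = ((r + 1 : ℕ) : ℤ) by push_cast; ring, zpow_natCast, h1]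
      have hbez : (e : ℤ) = 2 * h * Int.gcdA (2 * h) ((r : ℤ) + 1) +
          ((r : ℤ) + 1) * Int.gcdB (2 * h) ((r : ℤ) + 1) := by
        rw [← hg2]; exact Int.gcd_eq_gcd_ab _ _
      have : w ^ (e : ℤ) = 1 := by
        rw [hbez, zpow_add, zpow_mul w (2 * h), zpow_mul w ((r : ℤ) + 1), h2', h1', one_zpow,
          one_zpow, one_mul]
      rwa [zpow_natCast] at this
    · intro hwe
      constructor
      · obtain ⟨c, hc⟩ := hednv
        rw [hc, pow_mul, hwe, one_pow]
      · obtain ⟨d, hd⟩ := heh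
        have : (-(2 * h)) = (e : ℤ) * (-(2 * d)) := by rw [hd]; ring
        rw [this, zpow_mul, zpow_natCast, hwe, one_zpow]
  -- the map and the auxiliary function
  set A := algebraMap K L a₀ with hA
  set ψ : Lˣ → Lˣ := fun z => z ^ (-(2 * h)) with hψ
  set g : Lˣ → L := fun u => A + ∑ i ∈ Finset.Icc 1 t,
      (a i * ((u ^ (i : ℤ) : Lˣ) : L) + (a i) ^ r * ((u ^ (-(i : ℤ)) : Lˣ) : L)) with hg
  have hψmul : ∀ x y : Lˣ, ψ (x * y) = ψ x * ψ y := by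
    intro x y; simp only [hψ, mul_zpow]
  have hψdef : ∀ z : Lˣ, ψ z = z ^ (-(2 * h)) := fun z => rfl
  have hcondg : ∀ z : Lˣ,
      (A + ∑ i ∈ Finset.Icc 1 t,
        (a i * ((z ^ (-(2 * (i : ℤ) * h)) : Lˣ) : L) +
          (a i) ^ r * ((z ^ (2 * (i : ℤ) * h) : Lˣ) : L)) = 0) ↔ g (ψ z) = 0 := by
    intro z
    have h1 : ∀ i : ℕ, (ψ z) ^ (i : ℤ) = z ^ (-(2 * (i : ℤ) * h)) := by
      intro i
      rw [hψdef, ← zpow_mul]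
      congr 1; ring
    have h2 : ∀ i : ℕ, (ψ z) ^ (-(i : ℤ)) = z ^ (2 * (i : ℤ) * h) := by
      intro i
      rw [hψdef, ← zpow_mul]
      congr 1; ring
    rw [hg]
    simp only [h1, h2]
  -- the polynomial
  set Q : Polynomial L := C A * X ^ t +
    ∑ i ∈ Finset.Icc 1 t, (C (a i) * X ^ (t + i) + C ((a i) ^ r) * X ^ (t - i)) with hQ
  have hQeval : ∀ u : Lˣ, Q.eval ↑u = (u : L) ^ t * g u := by
    intro u
    have hu : (u : L) ≠ 0 := u.ne_zero
    rw [hQ, hg]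
    simp only [eval_add, eval_mul, eval_pow, eval_C, eval_X, eval_finset_sum, mul_add,
      Finset.mul_sum]
    refine congrArg₂ (· + ·) (mul_comm _ _) (Finset.sum_congr rfl fun i hi => ?_)
    have hit : i ≤ t := (Finset.mem_Icc.mp hi).2
    rw [Units.val_zpow_eq_zpow_val, Units.val_zpow_eq_zpow_val, zpow_neg, zpow_natCast]
    have hts : (u : L) ^ t = (u : L) ^ (t - i) * (u : L) ^ i := by
      rw [← pow_add]; congr 1; omega
    rw [pow_add, hts]
    field_simp
  -- coefficients
  have hcoeff1 : ∀ i₀ ∈ Finset.Icc 1 t, Q.coeff (t + i₀) = a i₀ := by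
    intro i₀ hi₀
    obtain ⟨hi₀1, hi₀2⟩ := Finset.mem_Icc.mp hi₀
    have step : ∀ i ∈ Finset.Icc 1 t,
        (C (a i) * X ^ (t + i) + C ((a i) ^ r) * X ^ (t - i)).coeff (t + i₀)
          = if i = i₀ then a i else 0 := by
      intro i hi
      obtain ⟨h1, h2⟩ := Finset.mem_Icc.mp hi
      rw [coeff_add, coeff_C_mul, coeff_C_mul, coeff_X_pow, coeff_X_pow,
        if_neg (show ¬ t + i₀ = t - i by omega), mul_zero, add_zero]
      by_cases hii : i = i₀
      · subst hii; rw [if_pos rfl, if_pos rfl, mul_one]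
      · rw [if_neg (show ¬ t + i₀ = t + i by omega), mul_zero, if_neg hii]
    rw [hQ, coeff_add, coeff_C_mul, coeff_X_pow, if_neg (show ¬ t + i₀ = t by omega),
      mul_zero, zero_add, finset_sum_coeff, Finset.sum_congr rfl step, Finset.sum_ite_eq' (Finset.Icc 1 t) i₀ a,
      if_pos hi₀]
  have hcoeff0 : Q.coeff t = A := by
    have step : ∀ i ∈ Finset.Icc 1 t,
        (C (a i) * X ^ (t + i) + C ((a i) ^ r) * X ^ (t - i)).coeff t = 0 := by
      intro i hi
      obtain ⟨h1, h2⟩ := Finset.mem_Icc.mp hi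
      rw [coeff_add, coeff_C_mul, coeff_C_mul, coeff_X_pow, coeff_X_pow,
        if_neg (show ¬ t = t + i by omega), if_neg (show ¬ t = t - i by omega),
        mul_zero, mul_zero, add_zero]
    rw [hQ, coeff_add, coeff_C_mul, coeff_X_pow, if_pos rfl, mul_one, finset_sum_coeff,
      Finset.sum_congr rfl step, Finset.sum_const_zero, add_zero]
  have hQne : Q ≠ 0 := by
    intro hc
    by_cases hz : ∀ j ∈ Finset.Icc 1 t, a j = 0
    · have ha₀ : a₀ ≠ 0 := fun h0 => hne ⟨h0, hz⟩
      have := hcoeff0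
      rw [hc, coeff_zero] at this
      exact ha₀ ((map_eq_zero_iff _ (algebraMap K L).injective).mp this.symm)
    · push_neg at hz
      obtain ⟨i₀, hi₀m, hi₀⟩ := hz
      have := hcoeff1 i₀ hi₀m
      rw [hc, coeff_zero] at this
      exact hi₀ this.symm
  have hQdeg : Q.natDegree ≤ 2 * t := by
    rw [hQ]
    refine le_trans (natDegree_add_le _ _) (max_le ?_ ?_)
    · refine le_trans (natDegree_C_mul_le _ _) ?_
      rw [natDegree_X_pow]; omega
    · refine natDegree_sum_le_of_forall_le _ _ fun i hi => ?_
      obtain ⟨h1, h2⟩ := Finset.mem_Icc.mp hi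
      refine le_trans (natDegree_add_le _ _) (max_le ?_ ?_) <;>
        refine le_trans (natDegree_C_mul_le _ _) ?_ <;> rw [natDegree_X_pow] <;> omega
  -- the counting sets
  set S : Finset Lˣ := Finset.univ.filter (fun z => z ^ (r + 1) = 1 ∧ g (ψ z) = 0) with hS
  set T : Finset Lˣ := S.image ψ with hT
  -- card of the kernel set is e
  have hcardLx : Fintype.card Lˣ = r ^ 2 - 1 := by rw [Fintype.card_units, hL]
  have hrr : r ^ 2 = r * r := sq r
  have h4r : 4 ≤ r * r := Nat.mul_le_mul hr2 hr2
  have hN0 : r ^ 2 - 1 ≠ 0 := by omega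
  have hfact : (r + 1) * (r - 1) = r ^ 2 - 1 := by
    rcases Nat.exists_eq_add_of_le hr2 with ⟨m, rfl⟩
    have h1 : (2 + m) ^ 2 = m * m + 4 * m + 4 := by ring
    have h2 : (2 + m + 1) * (2 + m - 1) = m * m + 4 * m + 3 := by
      have h3 : 2 + m - 1 = m + 1 := by omega
      rw [h3]; ring
    omega
  have hedvdN : e ∣ r ^ 2 - 1 := dvd_trans hednv ⟨r - 1, hfact.symm⟩
  have hKcard : (Finset.univ.filter (fun w : Lˣ => w ^ e = 1)).card = e := by
    obtain ⟨g0, hg0⟩ := IsCyclic.exists_ofOrder_eq_natCard (α := Lˣ)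
    rw [Nat.card_eq_fintype_card, hcardLx] at hg0
    have hζord : orderOf (g0 ^ ((r ^ 2 - 1) / e)) = e := by
      rw [orderOf_pow, hg0, Nat.gcd_eq_right (Nat.div_dvd_of_dvd hedvdN),
        Nat.div_div_self hedvdN hN0]
    have hprim : IsPrimitiveRoot ((g0 ^ ((r ^ 2 - 1) / e) : Lˣ) : L) e := by
      have hp := IsPrimitiveRoot.orderOf (g0 ^ ((r ^ 2 - 1) / e))
      rw [hζord] at hp
      exact IsPrimitiveRoot.coe_units_iff.mpr hp
    have hcb : (Finset.univ.filter (fun w : Lˣ => w ^ e = 1)).card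
        = (nthRootsFinset e (1 : L)).card := by
      refine Finset.card_bij' (fun w _ => (w : L)) (fun x hx => Units.mk0 x fun h0 => ?_)
        ?_ ?_ ?_ ?_
      · rw [h0, mem_nthRootsFinset hepos, zero_pow (by omega : e ≠ 0)] at hx
        exact zero_ne_one hx
      · intro w hw
        rw [mem_nthRootsFinset hepos, ← Units.val_pow_eq_pow_val,
          (Finset.mem_filter.mp hw).2, Units.val_one]
      · intro x hx
        refine Finset.mem_filter.mpr ⟨Finset.mem_univ _, Units.ext ?_⟩
        rw [Units.val_pow_eq_pow_val, Units.val_mk0, (mem_nthRootsFinset hepos _).mp hx,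
          Units.val_one]
      · intro w hw; exact Units.ext rfl
      · intro x hx; rfl
    rw [hcb, hprim.card_nthRootsFinset]
  -- fibers all have cardinality e
  have hfib : ∀ u ∈ T, (S.filter (fun z => ψ z = u)).card = e := by
    intro u hu
    obtain ⟨z₀, hz₀S, hz₀u⟩ := Finset.mem_image.mp hu
    obtain ⟨-, hz₀1, hz₀2⟩ := Finset.mem_filter.mp hz₀S
    rw [← hKcard]
    refine Finset.card_nbij' (fun z => z₀⁻¹ * z) (fun w => z₀ * w) ?_ ?_ ?_ ?_
    · intro z hz
      obtain ⟨hzS, hzu⟩ := Finset.mem_filter.mp hz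
      obtain ⟨-, hz1, hz2⟩ := Finset.mem_filter.mp hzS
      refine Finset.mem_filter.mpr ⟨Finset.mem_univ _, (hker _).mp ⟨?_, ?_⟩⟩
      · rw [mul_pow, inv_pow, hz₀1, hz1, inv_one, one_mul]
      · rw [mul_zpow, inv_zpow, ← hψdef, ← hψdef, hz₀u, hzu, inv_mul_cancel]
    · intro w hw
      have hw' := (Finset.mem_filter.mp hw).2
      have hker' := (hker w).mpr hw'
      have hψw : ψ (z₀ * w) = u := by
        rw [hψmul, hz₀u, hψdef, hker'.2, mul_one]
      refine Finset.mem_filter.mpr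
        ⟨Finset.mem_filter.mpr ⟨Finset.mem_univ _, ?_, ?_⟩, hψw⟩
      · rw [mul_pow, hz₀1, hker'.1, one_mul]
      · rw [hψw, ← hz₀u]; exact hz₀2
    · intro z hz; show z₀ * (z₀⁻¹ * z) = z; rw [mul_inv_cancel_left]
    · intro w hw; show z₀⁻¹ * (z₀ * w) = w; rw [inv_mul_cancel_left]
  -- the image has at most 2t elements
  have hTcard : T.card ≤ 2 * t := by
    have hmaps : ∀ u ∈ T, ((u : Lˣ) : L) ∈ Q.roots.toFinset := by
      intro u hu
      obtain ⟨z, hz, rfl⟩ := Finset.mem_image.mp hu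
      obtain ⟨-, hz1, hz2⟩ := Finset.mem_filter.mp hz
      rw [Multiset.mem_toFinset, Polynomial.mem_roots hQne]
      show Q.eval _ = 0
      rw [hQeval, hz2, mul_zero]
    calc T.card ≤ Q.roots.toFinset.card :=
        Finset.card_le_card_of_injOn (fun u => (u : L)) hmaps
          (fun u _ v _ huv => Units.ext huv)
      _ ≤ Multiset.card Q.roots := Q.roots.toFinset_card_le
      _ ≤ Q.natDegree := Q.card_roots'
      _ ≤ 2 * t := hQdeg
  have hScard : S.card = T.card * e := by
    rw [Finset.card_eq_sum_card_fiberwise (fun z hz => Finset.mem_image_of_mem ψ hz),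
      Finset.sum_congr rfl hfib, Finset.sum_const, smul_eq_mul]
  refine ⟨T.card, hTcard, ?_⟩
  rw [Nat.card_eq_fintype_card, Fintype.card_subtype, ← hScard]
  congr 1
  ext z
  simp only [Finset.mem_filter, Finset.mem_univ, true_and, hS]
  exact and_congr_right fun _ => hcondg z
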